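/- Fix d ≥ 1 and mesh steps Δx_1, …, Δx_d > 0, and let (α_J)_{J∈ℤ^d} be the interpolation weights. Then for every y ∈ ℝ^d: Σ_{J∈ℤ^d} α_J(y) = 1 and Σ_{J∈ℤ^d} x_J α_J(y) = y (both sums having only finitely many nonzero terms). -/

import Mathlib

open MeasureTheory Real Set
open scoped RealInnerProductSpace ENNReal

noncomputable section

/-- `ℝ^d` with the Euclidean structure. -/
abbrev Euc (d : ℕ) := EuclideanSpace ℝ (Fin d)

open Classical in
/-- `∇̂W`: the gradient of `W` away from `0`, and `0` at `0`. -/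
def hatGrad {d : ℕ} (W : Euc d → ℝ) (x : Euc d) : Euc d :=
  if x = 0 then 0 else gradient W x

/-- Positive part `r⁺ = max(r,0)`. -/
def pos (r : ℝ) : ℝ := max r 0

/-- Negative part `r⁻ = max(-r,0)`. -/
def neg (r : ℝ) : ℝ := max (-r) 0

/-- The node `x_J = (J_1 Δx_1, …, J_d Δx_d)`. -/
def node {d : ℕ} (Δx : Fin d → ℝ) (J : Fin d → ℤ) : Euc d :=
  (EuclideanSpace.equiv (Fin d) ℝ).symm (fun i => (J i : ℝ) * Δx i)

/-- The cell `C_J = Π_i [(J_i - 1/2)Δx_i, (J_i + 1/2)Δx_i)`. -/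
def cell {d : ℕ} (Δx : Fin d → ℝ) (J : Fin d → ℤ) : Set (Euc d) :=
  {y | ∀ i, ((J i : ℝ) - 1/2) * Δx i ≤ y i ∧ y i < ((J i : ℝ) + 1/2) * Δx i}

open Classical in
/-- The interpolation weight `α_J(y)`: since the cells `(C_L)` are pairwise disjoint, at most
one of the summands below is nonzero, and this agrees with the case-by-case definition:
`1 - Σ_i |⟨y - x_J, e_i⟩|/Δx_i` if `y ∈ C_J`; `(⟨y - x_{J∓e_i}, e_i⟩)^±/Δx_i` if
`y ∈ C_{J∓e_i}`; and `0` otherwise. -/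
def interpWeight {d : ℕ} (Δx : Fin d → ℝ) (J : Fin d → ℤ) (y : Euc d) : ℝ :=
  (if y ∈ cell Δx J then 1 - ∑ i, |y i - node Δx J i| / Δx i else 0)
    + ∑ i : Fin d,
      ((if y ∈ cell Δx (J - Pi.single i 1) then
          pos (y i - node Δx (J - Pi.single i 1) i) / Δx i else 0)
        + (if y ∈ cell Δx (J + Pi.single i 1) then
            neg (y i - node Δx (J + Pi.single i 1) i) / Δx i else 0))

lemma node_apply {d : ℕ} (Δx : Fin d → ℝ) (J : Fin d → ℤ) (i : Fin d) :
    node Δx J i = (J i : ℝ) * Δx i := rfl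

/-- A finite sum of `HasSum`s has sum the sum. -/
lemma hasSum_finset_sum {ι β α : Type*} [AddCommMonoid α] [TopologicalSpace α]
    [ContinuousAdd α] {f : ι → β → α} {a : ι → α} (s : Finset ι)
    (h : ∀ i ∈ s, HasSum (f i) (a i)) :
    HasSum (fun b => ∑ i ∈ s, f i b) (∑ i ∈ s, a i) := by
  classical
  induction s using Finset.induction_on with
  | empty => simpa using hasSum_zero
  | @insert i s his ih =>
    simp only [Finset.sum_insert his]
    exact (h i (Finset.mem_insert_self i s)).add
      (ih fun j hj => h j (Finset.mem_insert_of_mem hj))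

/-- The interpolation weights sum to `1` and reproduce the point `y`, with only
finitely many nonzero terms. -/
theorem stmt10 {d : ℕ} (hd : 1 ≤ d) (Δx : Fin d → ℝ) (hΔx : ∀ i, 0 < Δx i) :
    ∀ y : Euc d,
      (Function.support (fun J : Fin d → ℤ => interpWeight Δx J y)).Finite ∧
      HasSum (fun J : Fin d → ℤ => interpWeight Δx J y) 1 ∧
      HasSum (fun J : Fin d → ℤ => interpWeight Δx J y • node Δx J) y := by
  classical
  intro y
  set K : Fin d → ℤ := fun i => ⌊y i / Δx i + 1/2⌋ with hK
  -- coordinatewise characterization of cell membership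
  have hco : ∀ (z : ℤ) (i : Fin d),
      ((((z : ℝ) - 1/2) * Δx i ≤ y i ∧ y i < ((z : ℝ) + 1/2) * Δx i)) ↔ z = K i := by
    intro z i
    have hi := hΔx i
    rw [show (z = K i) ↔ (⌊y i / Δx i + 1/2⌋ = z) from eq_comm, Int.floor_eq_iff]
    constructor
    · rintro ⟨h1, h2⟩
      have h1' : (z : ℝ) - 1/2 ≤ y i / Δx i := (le_div_iff₀ hi).2 h1
      have h2' : y i / Δx i < (z : ℝ) + 1/2 := (div_lt_iff₀ hi).2 h2
      constructor
      · linarith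
      · push_cast; linarith
    · rintro ⟨h1, h2⟩
      push_cast at h2
      constructor
      · exact (le_div_iff₀ hi).1 (by linarith)
      · exact (div_lt_iff₀ hi).1 (by linarith)
  have hmem : ∀ J : Fin d → ℤ, y ∈ cell Δx J ↔ J = K := by
    intro J
    simp only [cell, Set.mem_setOf_eq]
    rw [funext_iff]
    exact forall_congr' fun i => hco (J i) i
  set v : ℝ := 1 - ∑ i, |y i - node Δx K i| / Δx i with hv
  set p : Fin d → ℝ := fun i => pos (y i - node Δx K i) / Δx i with hp
  set n : Fin d → ℝ := fun i => neg (y i - node Δx K i) / Δx i with hn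
  -- the three pieces of interpWeight as point masses
  have h1 : ∀ J : Fin d → ℤ,
      (if y ∈ cell Δx J then 1 - ∑ i, |y i - node Δx J i| / Δx i else 0)
        = (if J = K then v else 0) := by
    intro J
    rw [hmem J]
    by_cases h : J = K
    · subst h; simp [hv]
    · simp [h]
  have h2 : ∀ (i : Fin d) (J : Fin d → ℤ),
      (if y ∈ cell Δx (J - Pi.single i 1) then
          pos (y i - node Δx (J - Pi.single i 1) i) / Δx i else 0)
        = (if J = K + Pi.single i 1 then p i else 0) := by
    intro i J
    rw [hmem, sub_eq_iff_eq_add]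
    by_cases h : J = K + Pi.single i 1
    · subst h; simp [hp]
    · simp [h]
  have h3 : ∀ (i : Fin d) (J : Fin d → ℤ),
      (if y ∈ cell Δx (J + Pi.single i 1) then
          neg (y i - node Δx (J + Pi.single i 1) i) / Δx i else 0)
        = (if J = K - Pi.single i 1 then n i else 0) := by
    intro i J
    rw [hmem, ← eq_sub_iff_add_eq]
    by_cases h : J = K - Pi.single i 1
    · subst h; simp [hn]
    · simp [h]
  have hiw : ∀ J : Fin d → ℤ, interpWeight Δx J y =
      (if J = K then v else 0)
        + ∑ i : Fin d, ((if J = K + Pi.single i 1 then p i else 0)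
            + (if J = K - Pi.single i 1 then n i else 0)) := by
    intro J
    rw [interpWeight, h1 J]
    congr 1
    exact Finset.sum_congr rfl fun i _ => by rw [h2 i J, h3 i J]
  have habs : ∀ i : Fin d, p i + n i = |y i - node Δx K i| / Δx i := by
    intro i
    rw [hp, hn, ← add_div]
    congr 1
    exact max_zero_add_max_neg_zero_eq_abs_self _
  have hsum1 : v + ∑ i, (p i + n i) = 1 := by
    rw [Finset.sum_congr rfl fun i _ => habs i, hv]
    ring
  -- finiteness of the support
  have hfin : (Function.support fun J : Fin d → ℤ => interpWeight Δx J y).Finite := by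
    apply Set.Finite.subset
      (((Set.finite_range fun i : Fin d => K + Pi.single i 1).union
        (Set.finite_range fun i : Fin d => K - Pi.single i 1)).insert K)
    intro J hJ
    rw [Function.mem_support, hiw J] at hJ
    by_contra hJ'
    simp only [Set.mem_insert_iff, Set.mem_union, Set.mem_range, not_or, not_exists] at hJ'
    obtain ⟨hK1, hK2, hK3⟩ := hJ'
    apply hJ
    rw [if_neg hK1, Finset.sum_eq_zero fun i _ => by
      rw [if_neg fun h => hK2 i h.symm, if_neg fun h => hK3 i h.symm, add_zero]]
    simp
  refine ⟨hfin, ?_, ?_⟩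
  · -- scalar sum
    have H : HasSum (fun J : Fin d → ℤ =>
        (if J = K then v else 0)
          + ∑ i : Fin d, ((if J = K + Pi.single i 1 then p i else 0)
              + (if J = K - Pi.single i 1 then n i else 0)))
        (v + ∑ i, (p i + n i)) :=
      (hasSum_ite_eq K v).add (hasSum_finset_sum Finset.univ fun i _ =>
        (hasSum_ite_eq _ (p i)).add (hasSum_ite_eq _ (n i)))
    rw [hsum1] at H
    exact H.congr_fun fun J => hiw J
  · -- vector sum
    have key : ∀ (L : Fin d → ℤ) (a : ℝ) (J : Fin d → ℤ),
        (if J = L then a else 0) • node Δx J = (if J = L then a • node Δx L else 0) := by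
      intro L a J
      by_cases h : J = L
      · subst h; simp
      · simp [h]
    have hiw2 : ∀ J : Fin d → ℤ, interpWeight Δx J y • node Δx J =
        (if J = K then v • node Δx K else 0)
          + ∑ i : Fin d, ((if J = K + Pi.single i 1 then p i • node Δx (K + Pi.single i 1) else 0)
              + (if J = K - Pi.single i 1 then n i • node Δx (K - Pi.single i 1) else 0)) := by
      intro J
      rw [hiw J, add_smul, Finset.sum_smul, key]
      congr 1
      exact Finset.sum_congr rfl fun i _ => by rw [add_smul, key, key]
    have H : HasSum (fun J : Fin d → ℤ => interpWeight Δx J y • node Δx J)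
        (v • node Δx K + ∑ i, (p i • node Δx (K + Pi.single i 1)
          + n i • node Δx (K - Pi.single i 1))) := by
      refine HasSum.congr_fun ?_ fun J => hiw2 J
      exact (hasSum_ite_eq K _).add (hasSum_finset_sum Finset.univ fun i _ =>
        (hasSum_ite_eq _ _).add (hasSum_ite_eq _ _))
    have hfinal : v • node Δx K + ∑ i, (p i • node Δx (K + Pi.single i 1)
        + n i • node Δx (K - Pi.single i 1)) = y := by
      ext j
      rw [PiLp.add_apply, show (∑ i : Fin d, (p i • node Δx (K + Pi.single i 1)
            + n i • node Δx (K - Pi.single i 1))) j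
          = ∑ i : Fin d, (p i • node Δx (K + Pi.single i 1)
            + n i • node Δx (K - Pi.single i 1)) j from by rw [WithLp.ofLp_sum]; exact Finset.sum_apply _ _ _]
      have hnode : ∀ (L : Fin d → ℤ), node Δx L j = (L j : ℝ) * Δx j := fun L => rfl
      simp only [PiLp.add_apply, PiLp.smul_apply, smul_eq_mul, Finset.sum_apply, hnode,
        Pi.add_apply, Pi.sub_apply, Pi.single_apply]
      push_cast
      have hsplit : ∀ i : Fin d,
          p i * (((K j : ℝ) + if j = i then (1:ℝ) else 0) * Δx j)
            + n i * (((K j : ℝ) - if j = i then (1:ℝ) else 0) * Δx j)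
          = (p i + n i) * ((K j : ℝ) * Δx j)
            + (if j = i then (p i - n i) * Δx j else 0) := by
        intro i
        split_ifs <;> ring
      rw [Finset.sum_congr rfl fun i _ => hsplit i, Finset.sum_add_distrib,
        ← Finset.sum_mul, Finset.sum_ite_eq Finset.univ j
          (fun i => (p i - n i) * Δx j)]
      have hpn : p j - n j = (y j - (K j : ℝ) * Δx j) / Δx j := by
        rw [hp, hn, div_sub_div_same]
        congr 1
        · exact max_zero_sub_max_neg_zero_eq_self _
      simp only [Finset.mem_univ, if_true, hpn]
      have hΔ : Δx j ≠ 0 := (hΔx j).ne'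
      field_simp
      have : (v + ∑ i, (p i + n i)) * ((K j : ℝ) * Δx j) = (K j : ℝ) * Δx j := by
        rw [hsum1, one_mul]
      nlinarith [this]
    rwa [hfinal] at H
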